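/- Let V be a subspace of 𝔽_q[x₁,…,x_m] with property (*). Then for every pair of subsets L, L' ⊆ V, letting N_q(f) = |{α ∈ 𝔽_q^m : f(α)=0}|, we have |Σ_{f∈L, f'∈L'} N_q(f − f') − q^(m−1)·|L|·|L'|| ≤ q^(dim V − 1)·√(|L|·|L'|). -/

import Mathlib

open Finset

private lemma aux_sum_fiber {ι κ : Type*} [Fintype κ] [DecidableEq κ] (s : Finset ι)
    (φ : ι → κ) (g : κ → ℝ) :
    ∑ i ∈ s, g (φ i) = ∑ c : κ, ((s.filter fun i => φ i = c).card : ℝ) * g c := by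
  have h1 : ∀ i, g (φ i) = ∑ c : κ, if φ i = c then g c else 0 := by
    intro i; simp
  simp_rw [h1]
  rw [Finset.sum_comm]
  refine Finset.sum_congr rfl fun c _ => ?_
  rw [← Finset.sum_filter, Finset.sum_const, nsmul_eq_mul]

private lemma aux_fiber_card {V W : Type*} [AddCommGroup V] [AddCommGroup W]
    [Fintype V] [Fintype W] [DecidableEq W] (T : V →+ W)
    (hT : Function.Surjective T) (z : W) :
    ((Finset.univ.filter fun v => T v = z).card) * Fintype.card W = Fintype.card V := by
  have key : ∀ z : W, ((Finset.univ.filter fun v => T v = z).card)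
      = ((Finset.univ.filter fun v => T v = 0).card) := by
    intro z
    obtain ⟨v₀, hv₀⟩ := hT z
    apply Finset.card_bij (fun v _ => v - v₀)
    · intro a ha
      simp only [Finset.mem_filter, Finset.mem_univ, true_and] at ha ⊢
      rw [map_sub, ha, hv₀, sub_self]
    · intro a _ b _ h
      exact by simpa using sub_left_injective h
    · intro b hb
      simp only [Finset.mem_filter, Finset.mem_univ, true_and] at hb ⊢
      exact ⟨b + v₀, by rw [map_add, hb, hv₀, zero_add], by simp⟩
  have hcard : Fintype.card V = ∑ z : W, ((Finset.univ.filter fun v => T v = z).card) := by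
    rw [← Finset.card_univ]
    exact Finset.card_eq_sum_card_fiberwise fun x _ => Finset.mem_univ (T x)
  rw [key z, hcard, Finset.sum_congr rfl fun w _ => key w, Finset.sum_const, smul_eq_mul,
    Finset.card_univ, mul_comm]

private lemma aux_pow_inj {F : Type} [Field F] [Fintype F] [DecidableEq F] {k : ℕ} (hk : 0 < k)
    (hg : Nat.gcd k (Fintype.card F - 1) = 1) {a b : F} (h : a ^ k = b ^ k) : a = b := by
  rcases eq_or_ne b 0 with rfl | hb
  · rw [zero_pow hk.ne'] at h
    exact pow_eq_zero_iff hk.ne' |>.mp h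
  rcases eq_or_ne a 0 with rfl | ha
  · rw [zero_pow hk.ne'] at h
    exact (pow_eq_zero_iff hk.ne' |>.mp h.symm).symm
  have hcop : (Nat.card Fˣ).Coprime k := by
    rw [Nat.card_eq_fintype_card, Fintype.card_units]
    exact (Nat.coprime_iff_gcd_eq_one.mpr hg).symm
  have hinj := (powCoprime hcop).injective
  have hab : powCoprime hcop (Units.mk0 a ha) = powCoprime hcop (Units.mk0 b hb) := by
    ext; simpa [powCoprime] using h
  exact congrArg Units.val (hinj hab)

private lemma stmt12_key {m : ℕ} {F : Type} [Field F] [Fintype F] [DecidableEq F]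
    (V : Submodule F (MvPolynomial (Fin m) F)) (I : Finset (Fin m →₀ ℕ))
    (hV : V = Submodule.span F ((fun d => MvPolynomial.monomial d (1 : F)) '' I))
    (h0 : (0 : Fin m →₀ ℕ) ∈ I)
    (hpure : ∀ j : Fin m, ∃ k : ℕ, 0 < k ∧ Nat.gcd k (Fintype.card F - 1) = 1 ∧
      Finsupp.single j k ∈ I)
    (L : Finset (MvPolynomial (Fin m) F)) (hL : ∀ f ∈ L, f ∈ V) :
    ∑ α : Fin m → F, ∑ c : F,
        (((L.filter fun f => MvPolynomial.eval α f = c).card : ℝ)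
          - (L.card : ℝ) / (Fintype.card F : ℝ)) ^ 2
      ≤ (Fintype.card F : ℝ) ^ (Module.finrank F V - 1) * (L.card : ℝ) := by
  classical
  have h1V : (1 : MvPolynomial (Fin m) F) ∈ V := by
    rw [hV]
    apply Submodule.subset_span
    exact ⟨0, by simpa using h0, by simp [MvPolynomial.monomial_zero']⟩
  have hfd : FiniteDimensional F V := hV ▸ FiniteDimensional.span_of_finite F
    (I.finite_toSet.image _)
  haveI : Finite V := Module.finite_of_finite F
  letI : Fintype V := Fintype.ofFinite V
  have hQ0 : (0:ℝ) < (Fintype.card F : ℝ) := by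
    exact_mod_cast Fintype.card_pos
  have hQne : (Fintype.card F : ℝ) ≠ 0 := ne_of_gt hQ0
  have hntV : Nontrivial V := ⟨⟨1, h1V⟩, 0, by simp [Subtype.ext_iff]⟩
  have hd1 : 0 < Module.finrank F V := Module.finrank_pos
  have hcardV : Fintype.card V = Fintype.card F ^ Module.finrank F V := Module.card_eq_pow_finrank
  -- surjectivity of single evaluation
  have hev1 : ∀ α : Fin m → F, Function.Surjective
      (fun v : V => MvPolynomial.eval α (v : MvPolynomial (Fin m) F)) := by
    intro α c
    refine ⟨⟨c • 1, V.smul_mem c h1V⟩, ?_⟩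
    simp [MvPolynomial.smul_eq_C_mul]
  -- surjectivity of pair evaluation
  have hev2 : ∀ α β : Fin m → F, α ≠ β → Function.Surjective (fun v : V =>
      (MvPolynomial.eval α (v : MvPolynomial (Fin m) F),
       MvPolynomial.eval β (v : MvPolynomial (Fin m) F))) := by
    intro α β hab
    have hj : ∃ j, α j ≠ β j := by
      by_contra h; push_neg at h; exact hab (funext h)
    obtain ⟨j, hj⟩ := hj
    obtain ⟨k, hk, hgcd, hkI⟩ := hpure j
    set p : MvPolynomial (Fin m) F := MvPolynomial.monomial (Finsupp.single j k) 1 with hp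
    have hpV : p ∈ V := by
      rw [hV]; exact Submodule.subset_span ⟨Finsupp.single j k, by simpa using hkI, rfl⟩
    have hevp : ∀ γ : Fin m → F, MvPolynomial.eval γ p = (γ j) ^ k := by
      intro γ
      rw [hp, MvPolynomial.eval_monomial]
      simp [Finsupp.prod_single_index]
    have hst : (α j) ^ k ≠ (β j) ^ k := fun h => hj (aux_pow_inj hk hgcd h)
    rintro ⟨u, w⟩
    have hs : (α j) ^ k - (β j) ^ k ≠ 0 := sub_ne_zero.mpr hst
    set lam := (u - w) / ((α j) ^ k - (β j) ^ k) with hlam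
    set mu := w - lam * ((β j) ^ k) with hmu
    refine ⟨⟨lam • p + mu • 1, V.add_mem (V.smul_mem _ hpV) (V.smul_mem _ h1V)⟩, ?_⟩
    have hlameq : lam * ((α j) ^ k - (β j) ^ k) = u - w := div_mul_cancel₀ _ hs
    have e1 : MvPolynomial.eval α (lam • p + mu • 1) = u := by
      rw [MvPolynomial.smul_eq_C_mul, MvPolynomial.smul_eq_C_mul, map_add, map_mul, map_mul,
        MvPolynomial.eval_C, MvPolynomial.eval_C, map_one, mul_one, hevp]
      rw [hmu]; linear_combination hlameq
    have e2 : MvPolynomial.eval β (lam • p + mu • 1) = w := by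
      rw [MvPolynomial.smul_eq_C_mul, MvPolynomial.smul_eq_C_mul, map_add, map_mul, map_mul,
        MvPolynomial.eval_C, MvPolynomial.eval_C, map_one, mul_one, hevp]
      rw [hmu]; ring
    exact Prod.ext e1 e2
  -- fiber cardinalities
  have fib1 : ∀ (α : Fin m → F) (c : F),
      (((Finset.univ.filter fun v : V =>
          MvPolynomial.eval α (v : MvPolynomial (Fin m) F) = c).card : ℝ))
        * (Fintype.card F : ℝ) = (Fintype.card F : ℝ) ^ Module.finrank F V := by
    intro α c
    set T : V →+ F := AddMonoidHom.mk'
      (fun v : V => MvPolynomial.eval α (v : MvPolynomial (Fin m) F))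
      (by intro v w; push_cast; rw [map_add]) with hT
    have hTs : Function.Surjective T := hev1 α
    have h := aux_fiber_card T hTs c
    have : (((Finset.univ.filter fun v : V => T v = c).card : ℝ))
        * (Fintype.card F : ℝ) = ((Fintype.card V : ℕ) : ℝ) := by exact_mod_cast h
    rw [hcardV] at this
    push_cast at this ⊢
    convert this using 3
    rfl
  have fib2 : ∀ (α β : Fin m → F), α ≠ β → ∀ cc : F × F,
      (((Finset.univ.filter fun v : V =>
          (MvPolynomial.eval α (v : MvPolynomial (Fin m) F),
           MvPolynomial.eval β (v : MvPolynomial (Fin m) F)) = cc).card : ℝ))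
        * (Fintype.card F : ℝ) ^ 2 = (Fintype.card F : ℝ) ^ Module.finrank F V := by
    intro α β hab cc
    set T : V →+ F × F := AddMonoidHom.mk'
      (fun v : V => (MvPolynomial.eval α (v : MvPolynomial (Fin m) F),
        MvPolynomial.eval β (v : MvPolynomial (Fin m) F)))
      (by intro v w; push_cast; rw [map_add, map_add]; rfl) with hT
    have hTs : Function.Surjective T := hev2 α β hab
    have h := aux_fiber_card T hTs cc
    rw [Fintype.card_prod] at h
    have : (((Finset.univ.filter fun v : V => T v = cc).card : ℝ))
        * ((Fintype.card F : ℝ) * (Fintype.card F : ℝ)) = ((Fintype.card V : ℕ) : ℝ) := by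
      exact_mod_cast h
    rw [hcardV] at this
    push_cast at this ⊢
    rw [sq]
    convert this using 3
    rfl
  -- abbreviations
  set Lc : ℝ := (L.card : ℝ) with hLc
  set a : ℝ := Lc / (Fintype.card F : ℝ) with ha
  set n : (Fin m → F) → F → ℝ :=
    fun α c => ((L.filter fun f => MvPolynomial.eval α f = c).card : ℝ) with hn
  set t : (Fin m → F) → ℝ := fun α => ∑ c : F, (n α c - a) ^ 2 with htdef
  set P : ℝ := (Fintype.card F : ℝ) ^ (Module.finrank F V - 1) with hPdef
  have hP0 : 0 < P := pow_pos hQ0 _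
  have hPQ : P * (Fintype.card F : ℝ) = (Fintype.card F : ℝ) ^ Module.finrank F V := by
    rw [hPdef, ← pow_succ]
    congr 1
    omega
  -- goal in terms of t
  suffices hgoal : ∑ α : Fin m → F, t α ≤ P * Lc by
    simpa [htdef, hn, ha, hLc] using hgoal
  -- basic sums
  have hsum_n : ∀ α, ∑ c : F, n α c = Lc := by
    intro α
    have hnat : ∑ c : F, (L.filter fun f => MvPolynomial.eval α f = c).card = L.card := by
      rw [Finset.sum_card_fiberwise_eq_card_filter]; simp
    rw [hn, hLc]; dsimp only; exact_mod_cast hnat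
  have hsum_u : ∀ α, ∑ c : F, (n α c - a) = 0 := by
    intro α
    rw [Finset.sum_sub_distrib, hsum_n, Finset.sum_const, Finset.card_univ, nsmul_eq_mul, ha]
    field_simp
    ring
  -- the vectors over V
  set x : V → ℝ := fun v => if (v : MvPolynomial (Fin m) F) ∈ L then 1 else 0 with hx
  set y : (Fin m → F) → V → ℝ :=
    fun α v => n α (MvPolynomial.eval α (v : MvPolynomial (Fin m) F)) - a with hy
  have sumV_L : ∀ g : MvPolynomial (Fin m) F → ℝ,
      ∑ v : V, (if (v : MvPolynomial (Fin m) F) ∈ L then g (v : MvPolynomial (Fin m) F) else 0)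
        = ∑ f ∈ L, g f := by
    intro g
    rw [← Finset.sum_filter]
    refine Finset.sum_bij (fun v _ => (v : MvPolynomial (Fin m) F)) ?_ ?_ ?_ ?_
    · intro v hv; simpa using (Finset.mem_filter.mp hv).2
    · intro v _ w _ h; exact Subtype.ext h
    · intro f hf; exact ⟨⟨f, hL f hf⟩, by simp [hf], rfl⟩
    · intro v _; rfl
  have hxx : ∑ v : V, x v * x v = Lc := by
    have h1 : ∀ v : V, x v * x v
        = (if (v : MvPolynomial (Fin m) F) ∈ L then (fun _ => (1:ℝ)) (v : MvPolynomial (Fin m) F) else 0) := by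
      intro v; by_cases h : (v : MvPolynomial (Fin m) F) ∈ L <;> simp [hx, h]
    rw [Finset.sum_congr rfl fun v _ => h1 v, sumV_L (fun _ => (1:ℝ)), hLc]
    simp
  have hnt : ∀ α, ∑ c : F, n α c * (n α c - a) = t α := by
    intro α
    have h2 : t α = ∑ c : F, ((n α c) * (n α c - a) - a * (n α c - a)) := by
      rw [htdef]; exact Finset.sum_congr rfl fun c _ => by ring
    rw [h2, Finset.sum_sub_distrib, ← Finset.mul_sum, hsum_u, mul_zero, sub_zero]
  have hxy : ∀ α, ∑ v : V, x v * y α v = t α := by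
    intro α
    have h1 : ∀ v : V, x v * y α v
        = (if (v : MvPolynomial (Fin m) F) ∈ L then
            (fun f => n α (MvPolynomial.eval α f) - a) (v : MvPolynomial (Fin m) F) else 0) := by
      intro v; by_cases h : (v : MvPolynomial (Fin m) F) ∈ L <;> simp [hx, hy, h]
    rw [Finset.sum_congr rfl fun v _ => h1 v, sumV_L (fun f => n α (MvPolynomial.eval α f) - a)]
    rw [aux_sum_fiber L (fun f => MvPolynomial.eval α f) (fun c => n α c - a)]
    rw [← hnt α]
  have hyy : ∀ α, ∑ v : V, y α v * y α v = P * t α := by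
    intro α
    have h1 : ∑ v : V, y α v * y α v
        = ∑ v : V, (fun c => (n α c - a) ^ 2) (MvPolynomial.eval α (v : MvPolynomial (Fin m) F)) := by
      exact Finset.sum_congr rfl fun v _ => by rw [hy]; ring
    rw [h1, aux_sum_fiber (Finset.univ : Finset V)
      (fun v : V => MvPolynomial.eval α (v : MvPolynomial (Fin m) F)) (fun c => (n α c - a) ^ 2)]
    have h2 : ∀ c : F, (((Finset.univ.filter fun v : V =>
        MvPolynomial.eval α (v : MvPolynomial (Fin m) F) = c).card : ℝ)) = P := by
      intro c
      have := fib1 α c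
      rw [← hPQ] at this
      exact mul_right_cancel₀ hQne this
    rw [Finset.sum_congr rfl fun c _ => by rw [h2 c], ← Finset.mul_sum, htdef]
  have hyy0 : ∀ α β, α ≠ β → ∑ v : V, y α v * y β v = 0 := by
    intro α β hab
    have h1 : ∑ v : V, y α v * y β v
        = ∑ v : V, (fun cc : F × F => (n α cc.1 - a) * (n β cc.2 - a))
            ((fun v : V => (MvPolynomial.eval α (v : MvPolynomial (Fin m) F),
              MvPolynomial.eval β (v : MvPolynomial (Fin m) F))) v) := by
      exact Finset.sum_congr rfl fun v _ => by rw [hy]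
    rw [h1, aux_sum_fiber (Finset.univ : Finset V) _ (fun cc : F × F => (n α cc.1 - a) * (n β cc.2 - a))]
    have h2 : ∀ cc : F × F, (((Finset.univ.filter fun v : V =>
        (MvPolynomial.eval α (v : MvPolynomial (Fin m) F),
         MvPolynomial.eval β (v : MvPolynomial (Fin m) F)) = cc).card : ℝ))
          = (Fintype.card F : ℝ) ^ Module.finrank F V / (Fintype.card F : ℝ) ^ 2 := by
      intro cc
      rw [eq_div_iff (by positivity)]
      exact fib2 α β hab cc
    rw [Finset.sum_congr rfl fun cc _ => by rw [h2 cc], ← Finset.mul_sum]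
    have h3 : ∑ cc : F × F, (n α cc.1 - a) * (n β cc.2 - a)
        = (∑ c : F, (n α c - a)) * (∑ c : F, (n β c - a)) := by
      rw [Finset.sum_mul_sum]
      exact Fintype.sum_prod_type _
    rw [h3, hsum_u, zero_mul, mul_zero]
  -- Bessel
  set T : ℝ := ∑ α : Fin m → F, t α with hTdef
  set S : V → ℝ := fun v => ∑ α : Fin m → F, y α v with hS
  have hA2 : ∑ v : V, x v * S v = T := by
    have h1 : ∑ v : V, x v * S v = ∑ v : V, ∑ α : Fin m → F, x v * y α v := by
      exact Finset.sum_congr rfl fun v _ => by rw [hS]; exact Finset.mul_sum _ _ _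
    rw [h1, Finset.sum_comm, hTdef]
    exact Finset.sum_congr rfl fun α _ => hxy α
  have hA3 : ∑ v : V, S v * S v = P * T := by
    have h1 : ∑ v : V, S v * S v
        = ∑ v : V, ∑ α : Fin m → F, ∑ β : Fin m → F, y α v * y β v := by
      refine Finset.sum_congr rfl fun v _ => ?_
      rw [hS, Finset.sum_mul_sum]
    rw [h1, Finset.sum_comm]
    have h2 : ∀ α : Fin m → F, ∑ v : V, ∑ β : Fin m → F, y α v * y β v = P * t α := by
      intro α
      rw [Finset.sum_comm]
      rw [Finset.sum_eq_single α (fun β _ hβ => hyy0 α β (Ne.symm hβ)) (by simp)]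
      exact hyy α
    rw [Finset.sum_congr rfl fun α _ => h2 α, ← Finset.mul_sum, hTdef]
  have hbessel : 0 ≤ Lc - P⁻¹ * T := by
    have h0' : (0:ℝ) ≤ ∑ v : V, (x v - P⁻¹ * S v) ^ 2 :=
      Finset.sum_nonneg fun _ _ => sq_nonneg _
    have hexp : ∑ v : V, (x v - P⁻¹ * S v) ^ 2
        = (∑ v : V, x v * x v) - 2 * P⁻¹ * (∑ v : V, x v * S v)
          + P⁻¹ ^ 2 * (∑ v : V, S v * S v) := by
      rw [Finset.mul_sum, Finset.mul_sum, ← Finset.sum_sub_distrib, ← Finset.sum_add_distrib]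
      exact Finset.sum_congr rfl fun v _ => by ring
    rw [hexp, hxx, hA2, hA3] at h0'
    have hPP : P⁻¹ ^ 2 * (P * T) = P⁻¹ * T := by
      field_simp
    rw [hPP] at h0'
    linarith
  have h1 : P⁻¹ * T ≤ Lc := by linarith
  calc T = P * (P⁻¹ * T) := by field_simp
    _ ≤ P * Lc := mul_le_mul_of_nonneg_left h1 hP0.le

/-- Cross incidence bound for two sets of multivariate polynomials from a subspace `V` with
property (*): `|Σ_{f∈L,f'∈L'} N_q(f−f') − q^(m−1)|L||L'|| ≤ q^(dim V −1)·√(|L||L'|)`. -/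
theorem stmt12 {m : ℕ} {F : Type} [Field F] [Fintype F] [DecidableEq F] (hm : 0 < m)
    (V : Submodule F (MvPolynomial (Fin m) F)) (I : Finset (Fin m →₀ ℕ))
    (hV : V = Submodule.span F ((fun d => MvPolynomial.monomial d (1 : F)) '' I))
    (h0 : (0 : Fin m →₀ ℕ) ∈ I)
    (hpure : ∀ j : Fin m, ∃ k : ℕ, 0 < k ∧ Nat.gcd k (Fintype.card F - 1) = 1 ∧
      Finsupp.single j k ∈ I)
    (L L' : Finset (MvPolynomial (Fin m) F))
    (hL : ∀ f ∈ L, f ∈ V) (hL' : ∀ f ∈ L', f ∈ V) :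
    |(∑ f ∈ L, ∑ f' ∈ L',
        ((Finset.univ.filter fun a : Fin m → F =>
          MvPolynomial.eval a (f - f') = 0).card : ℝ)) -
        (Fintype.card F : ℝ) ^ (m - 1) * (L.card : ℝ) * (L'.card : ℝ)| ≤
      (Fintype.card F : ℝ) ^ (Module.finrank F V - 1) *
        Real.sqrt ((L.card : ℝ) * (L'.card : ℝ)) := by
  classical
  have hQ0 : (0:ℝ) < (Fintype.card F : ℝ) := by exact_mod_cast Fintype.card_pos
  have hQne : (Fintype.card F : ℝ) ≠ 0 := ne_of_gt hQ0
  set Lc : ℝ := (L.card : ℝ) with hLc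
  set Lc' : ℝ := (L'.card : ℝ) with hLc'
  set a : ℝ := Lc / (Fintype.card F : ℝ) with ha
  set b : ℝ := Lc' / (Fintype.card F : ℝ) with hb
  set n : (Fin m → F) → F → ℝ :=
    fun α c => ((L.filter fun f => MvPolynomial.eval α f = c).card : ℝ) with hn
  set n' : (Fin m → F) → F → ℝ :=
    fun α c => ((L'.filter fun f => MvPolynomial.eval α f = c).card : ℝ) with hn'
  set P : ℝ := (Fintype.card F : ℝ) ^ (Module.finrank F V - 1) with hPdef
  have hP0 : 0 < P := pow_pos hQ0 _
  have hsum_n : ∀ α, ∑ c : F, n α c = Lc := by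
    intro α
    have hnat : ∑ c : F, (L.filter fun f => MvPolynomial.eval α f = c).card = L.card := by
      rw [Finset.sum_card_fiberwise_eq_card_filter]; simp
    rw [hn, hLc]; dsimp only; exact_mod_cast hnat
  have hsum_n' : ∀ α, ∑ c : F, n' α c = Lc' := by
    intro α
    have hnat : ∑ c : F, (L'.filter fun f => MvPolynomial.eval α f = c).card = L'.card := by
      rw [Finset.sum_card_fiberwise_eq_card_filter]; simp
    rw [hn', hLc']; dsimp only; exact_mod_cast hnat
  -- Step A : the double sum of zero counts
  have hA : (∑ f ∈ L, ∑ f' ∈ L',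
        ((Finset.univ.filter fun α : Fin m → F =>
          MvPolynomial.eval α (f - f') = 0).card : ℝ))
      = ∑ α : Fin m → F, ∑ c : F, n α c * n' α c := by
    have h1 : ∀ f f', ((Finset.univ.filter fun α : Fin m → F =>
        MvPolynomial.eval α (f - f') = 0).card : ℝ)
        = ∑ α : Fin m → F,
            (if MvPolynomial.eval α f' = MvPolynomial.eval α f then (1:ℝ) else 0) := by
      intro f f'
      rw [Finset.card_filter]
      push_cast
      refine Finset.sum_congr rfl fun α _ => ?_
      have hiff : (MvPolynomial.eval α (f - f') = 0)
          ↔ (MvPolynomial.eval α f' = MvPolynomial.eval α f) := by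
        rw [map_sub, sub_eq_zero, eq_comm]
      have hiff2 : ((MvPolynomial.eval α) f - (MvPolynomial.eval α) f' = 0)
          ↔ ((MvPolynomial.eval α) f' = (MvPolynomial.eval α) f) := by
        rw [sub_eq_zero, eq_comm]
      simp [hiff2]
    rw [Finset.sum_congr rfl fun f _ => Finset.sum_congr rfl fun f' _ => h1 f f']
    rw [Finset.sum_congr rfl fun f (_ : f ∈ L) => Finset.sum_comm, Finset.sum_comm]
    refine Finset.sum_congr rfl fun α _ => ?_
    have h2 : ∀ f, ∑ f' ∈ L',
        (if MvPolynomial.eval α f' = MvPolynomial.eval α f then (1:ℝ) else 0)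
        = n' α (MvPolynomial.eval α f) := by
      intro f
      rw [hn']
      rw [Finset.sum_boole]
    rw [Finset.sum_congr rfl fun f _ => h2 f]
    rw [aux_sum_fiber L (fun f => MvPolynomial.eval α f) (fun c => n' α c)]
  -- Step B : the main term
  have hB : (Fintype.card F : ℝ) ^ (m - 1) * Lc * Lc'
      = ∑ _α : Fin m → F, (Lc * Lc' / (Fintype.card F : ℝ)) := by
    rw [Finset.sum_const, Finset.card_univ, nsmul_eq_mul]
    have hcard : ((Fintype.card (Fin m → F) : ℕ) : ℝ)
        = (Fintype.card F : ℝ) ^ (m - 1) * (Fintype.card F : ℝ) := by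
      rw [Fintype.card_fun, Fintype.card_fin]
      push_cast
      rw [← pow_succ]
      congr 1
      omega
    rw [hcard]
    field_simp
  -- Step C : per-α expansion
  have hC : ∀ α, ∑ c : F, (n α c - a) * (n' α c - b)
      = (∑ c : F, n α c * n' α c) - Lc * Lc' / (Fintype.card F : ℝ) := by
    intro α
    have e : ∀ c, (n α c - a) * (n' α c - b)
        = n α c * n' α c - a * n' α c - b * n α c + a * b := fun c => by ring
    rw [Finset.sum_congr rfl fun c _ => e c, Finset.sum_add_distrib, Finset.sum_sub_distrib,
      Finset.sum_sub_distrib, ← Finset.mul_sum, ← Finset.mul_sum, hsum_n, hsum_n',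
      Finset.sum_const, Finset.card_univ, nsmul_eq_mul, ha, hb]
    field_simp
    ring
  have hdiff : (∑ f ∈ L, ∑ f' ∈ L',
        ((Finset.univ.filter fun α : Fin m → F =>
          MvPolynomial.eval α (f - f') = 0).card : ℝ))
        - (Fintype.card F : ℝ) ^ (m - 1) * Lc * Lc'
      = ∑ α : Fin m → F, ∑ c : F, (n α c - a) * (n' α c - b) := by
    rw [hA, hB, ← Finset.sum_sub_distrib]
    exact Finset.sum_congr rfl fun α _ => (hC α).symm
  -- Cauchy-Schwarz
  have hCS : (∑ α : Fin m → F, ∑ c : F, (n α c - a) * (n' α c - b)) ^ 2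
      ≤ (∑ α : Fin m → F, ∑ c : F, (n α c - a) ^ 2)
        * (∑ α : Fin m → F, ∑ c : F, (n' α c - b) ^ 2) := by
    rw [← Fintype.sum_prod_type (f := fun p : (Fin m → F) × F => (n p.1 p.2 - a) * (n' p.1 p.2 - b)),
      ← Fintype.sum_prod_type (f := fun p : (Fin m → F) × F => (n p.1 p.2 - a) ^ 2),
      ← Fintype.sum_prod_type (f := fun p : (Fin m → F) × F => (n' p.1 p.2 - b) ^ 2)]
    exact Finset.sum_mul_sq_le_sq_mul_sq Finset.univ _ _
  -- key bounds
  have key1 : (∑ α : Fin m → F, ∑ c : F, (n α c - a) ^ 2) ≤ P * Lc :=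
    stmt12_key V I hV h0 hpure L hL
  have key2 : (∑ α : Fin m → F, ∑ c : F, (n' α c - b) ^ 2) ≤ P * Lc' :=
    stmt12_key V I hV h0 hpure L' hL'
  have hnn1 : (0:ℝ) ≤ ∑ α : Fin m → F, ∑ c : F, (n α c - a) ^ 2 :=
    Finset.sum_nonneg fun _ _ => Finset.sum_nonneg fun _ _ => sq_nonneg _
  have h4 : (∑ α : Fin m → F, ∑ c : F, (n α c - a) * (n' α c - b)) ^ 2 ≤ (P * Lc) * (P * Lc') := by
    refine hCS.trans ?_
    have hPLc : (0:ℝ) ≤ P * Lc := by positivity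
    exact mul_le_mul key1 key2 (Finset.sum_nonneg fun _ _ => Finset.sum_nonneg fun _ _ => sq_nonneg _) hPLc
  rw [hdiff, ← Real.sqrt_sq_eq_abs]
  refine le_trans (Real.sqrt_le_sqrt h4) ?_
  rw [show (P * Lc) * (P * Lc') = P ^ 2 * (Lc * Lc') by ring,
    Real.sqrt_mul (by positivity), Real.sqrt_sq hP0.le]
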